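/- In the setting of the proof of the Livšic theorem, let z ∈ O(x) ∩ G with f^{2m}(z) ∈ O(x) ∩ G and d(z, f^{2m}(z)) < β, and let p be the periodic point with f^{2m}(p) = p and d(f^i(z), f^i(p)) ≤ hC e^{−η·min{i, 2m−i}} given by the Closing Lemma. Then there exists a constant C̃₁ > 0 independent of h, z, p, m such that ‖A^m(p)^{-1} A^m(z) − Id‖ ≤ C̃₁ h^α; in particular, for h ∈ (0,1), ‖A^m(p)^{-1} A^m(z)‖ ≤ C̃₁ + 1. -/

import Mathlib

open MeasureTheory Filter Metric Set Function
open scoped Topology NNReal Manifold ENNReal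

noncomputable section

abbrev Euc (m : ℕ) := EuclideanSpace ℝ (Fin m)
abbrev GLd (d : ℕ) := (Euc d →L[ℝ] Euc d)ˣ

def cocycle {M : Type*} {d : ℕ} (f : M → M) (A : M → GLd d) : ℕ → M → GLd d
  | 0, _ => 1
  | n + 1, x => A (f^[n] x) * cocycle f A n x

def cocycleCLM {M : Type*} {d : ℕ} (f : M → M) (A : M → GLd d) (n : ℕ) (x : M) :
    Euc d →L[ℝ] Euc d := (cocycle f A n x : Euc d →L[ℝ] Euc d)

def cocycleInv {M : Type*} {d : ℕ} (f : M → M) (A : M → GLd d) (n : ℕ) (x : M) :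
    Euc d →L[ℝ] Euc d := (((cocycle f A n x)⁻¹ : GLd d) : Euc d →L[ℝ] Euc d)

def PeriodicObstructionVanishes {M : Type*} {d : ℕ} (f : M → M) (A : M → GLd d) : Prop :=
  ∀ n : ℕ, 0 < n → ∀ p : M, f^[n] p = p → cocycle f A n p = 1

def fwdOrbit {M : Type*} (f : M → M) (x : M) : Set M := Set.range fun n : ℕ => f^[n] x

def measSupport {M : Type*} [TopologicalSpace M] [MeasurableSpace M] (μ : Measure M) : Set M :=
  {x | ∀ U ∈ nhds x, 0 < μ U}

def stableSet {M : Type*} [MetricSpace M] (f : M → M) (x : M) : Set M :=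
  {y | Tendsto (fun n : ℕ => dist (f^[n] y) (f^[n] x)) atTop (𝓝 0)}

def localStable {M : Type*} [MetricSpace M] (f : M → M) (δ : ℝ) (x : M) : Set M :=
  stableSet f x ∩ closedBall x δ

def hyperbolicBlock {M : Type*} [MetricSpace M] (f g : M → M) (C τ δ : ℝ) : Set M :=
  {x | (∀ y ∈ localStable f δ x, ∀ n : ℕ,
          dist (f^[n] y) (f^[n] x) ≤ C * Real.exp (-τ * n) * dist y x) ∧
       (∀ y ∈ localStable g δ x, ∀ n : ℕ,
          dist (g^[n] y) (g^[n] x) ≤ C * Real.exp (-τ * n) * dist y x)}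

def dominationSet {M : Type*} {d : ℕ} (f g : M → M) (A : M → GLd d) (N : ℕ) (θ : ℝ) :
    Set M :=
  {x | (∀ k : ℕ, 1 ≤ k →
          ∏ j ∈ Finset.range k,
            (‖cocycleCLM f A N (f^[j * N] x)‖ * ‖cocycleInv f A N (f^[j * N] x)‖)
            ≤ Real.exp (θ * k * N)) ∧
       (∀ k : ℕ, 1 ≤ k →
          ∏ j ∈ Finset.range k,
            (‖cocycleCLM g (fun y => (A (g y))⁻¹) N (g^[j * N] x)‖ *
             ‖cocycleInv g (fun y => (A (g y))⁻¹) N (g^[j * N] x)‖)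
            ≤ Real.exp (θ * k * N))}

def ClosingProperty {M : Type*} [MetricSpace M] (f : M → M) (G : Set M) (C η h β : ℝ) : Prop :=
  ∀ y ∈ G, ∀ n : ℕ, dist (f^[n] y) y < β → f^[n] y ∈ G →
    ∃ p : M, f^[n] p = p ∧
      ∀ i : ℕ, i ≤ n → dist (f^[i] y) (f^[i] p) ≤ h * C * Real.exp (-η * (min i (n - i) : ℕ))

def freqGT {M : Type*} (T : M → M) (S : Set M) (x : M) : Prop :=
  ∃ c : ℝ, 1 / 2 < c ∧
    Tendsto (fun n : ℕ => (∑ i ∈ Finset.Icc 1 n, S.indicator (fun _ => (1 : ℝ)) (T^[i] x)) / n)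
      atTop (𝓝 c)

def freqCond {M : Type*} (f g : M → M) (S : Set M) (x : M) : Prop :=
  freqGT f S x ∧ freqGT g S x

section Manifold

variable {m : ℕ} {M : Type*} [MetricSpace M] [CompactSpace M]
  [ChartedSpace (Euc m) M] [IsManifold (𝓡 m) (⊤ : ℕ∞) M]

def tangentNorm {x : M} (v : TangentSpace (𝓡 m) x) : ℝ := ‖show Euc m from v‖

def IsC1HolderDiffeo (f : M → M) : Prop :=
  ∃ g : M → M, Function.LeftInverse g f ∧ Function.RightInverse g f ∧
    ContMDiff (𝓡 m) (𝓡 m) 1 f ∧ ContMDiff (𝓡 m) (𝓡 m) 1 g ∧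
    ∃ εh K : ℝ≥0, 0 < εh ∧ ∀ x : M,
      HolderOnWith K εh (fderiv ℝ (writtenInExtChartAt (𝓡 m) (𝓡 m) x f))
        (extChartAt (𝓡 m) x).target

def IsHyperbolicMeasure [MeasurableSpace M] (f : M → M) (μ : Measure M) : Prop :=
  ∀ᵐ x ∂μ, ∀ v : TangentSpace (𝓡 m) x, v ≠ 0 →
    ∃ lam : ℝ, lam ≠ 0 ∧
      Tendsto (fun n : ℕ => Real.log (tangentNorm (mfderiv (𝓡 m) (𝓡 m) (f^[n]) x v)) / n)
        atTop (𝓝 lam)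

def IsChiHyperbolic [MeasurableSpace M] (f : M → M) (μ : Measure M) (χ : ℝ) : Prop :=
  0 < χ ∧ ∀ᵐ x ∂μ, ∀ v : TangentSpace (𝓡 m) x, v ≠ 0 →
    ∃ lam : ℝ, χ < |lam| ∧
      Tendsto (fun n : ℕ => Real.log (tangentNorm (mfderiv (𝓡 m) (𝓡 m) (f^[n]) x v)) / n)
        atTop (𝓝 lam)

def pesinSet (f g : M → M) (χ ε N : ℝ) : Set M :=
  {x | ∃ Es Eu : Submodule ℝ (TangentSpace (𝓡 m) x),
    Es ⊔ Eu = ⊤ ∧ Es ⊓ Eu = ⊥ ∧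
    (∀ v ∈ Es, ∀ n : ℕ,
      tangentNorm (mfderiv (𝓡 m) (𝓡 m) (f^[n]) x v) ≤
        N * Real.exp (-(χ - ε) * n) * tangentNorm v) ∧
    (∀ v ∈ Eu, ∀ n : ℕ,
      tangentNorm (mfderiv (𝓡 m) (𝓡 m) (g^[n]) x v) ≤
        N * Real.exp (-(χ - ε) * n) * tangentNorm v)}

end Manifold

def HasLocalProductStructure {M : Type*} [MetricSpace M] [MeasurableSpace M]
    (f g : M → M) (μ : Measure M) : Prop :=
  ∃ δ₀ : ℝ, 0 < δ₀ ∧ ∀ x ∈ measSupport μ, ∀ δ : ℝ, 0 < δ → δ ≤ δ₀ →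
    ∃ (Nu Ns : Set M) (b : M → M → M) (μu μs : Measure M),
      IsCompact Nu ∧ IsCompact Ns ∧ x ∈ Nu ∧ x ∈ Ns ∧
      Nu ⊆ localStable g δ x ∧ Ns ⊆ localStable f δ x ∧
      (∀ z ∈ Nu, ∀ w ∈ Ns, b z w ∈ stableSet f z ∩ stableSet g w) ∧
      Set.InjOn (fun p : M × M => b p.1 p.2) (Nu ×ˢ Ns) ∧
      μu (Set.univ \ Nu) = 0 ∧ μs (Set.univ \ Ns) = 0 ∧
      μ.restrict (Set.image2 b Nu Ns) ≪
        Measure.map (fun p : M × M => b p.1 p.2) (μu.prod μs) ∧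
      Measure.map (fun p : M × M => b p.1 p.2) (μu.prod μs) ≪
        μ.restrict (Set.image2 b Nu Ns)

def topLyapunov {M : Type*} {d : ℕ} (f : M → M) (A : M → GLd d) (x : M) : ℝ :=
  Filter.limsup (fun n : ℕ => Real.log ‖cocycleCLM f A n x‖ / n) Filter.atTop

def IsSDominated {M : Type*} [MetricSpace M] {d : ℕ} (f g : M → M) (A : M → GLd d)
    (s : ℝ) (x : M) : Prop :=
  ∃ (Cc τ δ θ : ℝ) (N : ℕ), 0 < Cc ∧ 0 < τ ∧ 0 < δ ∧ 0 < θ ∧ 1 ≤ N ∧ s * θ < τ ∧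
    x ∈ hyperbolicBlock f g Cc τ δ ∩ dominationSet f g A N θ

def zOrbit {M : Type*} (f g : M → M) (x : M) : Set M :=
  {y | (∃ n : ℕ, f^[n] x = y) ∨ ∃ n : ℕ, g^[n] x = y}

lemma cocycle_step_eq {M : Type*} {d : ℕ} (f : M → M) (A : M → GLd d) (p z : M) (i : ℕ) :
    cocycleInv f A (i+1) p * cocycleCLM f A (i+1) z -
      cocycleInv f A i p * cocycleCLM f A i z =
    cocycleInv f A (i+1) p *
      ((A (f^[i] z) : Euc d →L[ℝ] Euc d) - (A (f^[i] p) : Euc d →L[ℝ] Euc d)) *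
      cocycleCLM f A i z := by
  have h1 : cocycleCLM f A (i+1) z =
      (A (f^[i] z) : Euc d →L[ℝ] Euc d) * cocycleCLM f A i z := by
    simp [cocycleCLM, cocycle, Units.val_mul]
  have h2 : cocycleInv f A (i+1) p * (A (f^[i] p) : Euc d →L[ℝ] Euc d) =
      cocycleInv f A i p := by
    show (((cocycle f A (i+1) p)⁻¹ : GLd d) : Euc d →L[ℝ] Euc d) * _ = _
    rw [show cocycle f A (i+1) p = A (f^[i] p) * cocycle f A i p from rfl,
      mul_inv_rev, Units.val_mul, cocycleInv, mul_assoc, ← Units.val_mul,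
      inv_mul_cancel, Units.val_one, mul_one]
  rw [h1, ← h2, mul_sub, sub_mul, ← mul_assoc]

/-- **Estimate (3.3) in the proof of Proposition 3.2.** In the setting of the proof of the
Livšic theorem, with `p` the periodic point of period `2m` shadowing the returning orbit
segment of `z`: there is `C̃₁ > 0`, independent of `h`, `z`, `p`, `m`, such that
`‖A^m(p)⁻¹ A^m(z) - Id‖ ≤ C̃₁ h^α`; in particular `‖A^m(p)⁻¹ A^m(z)‖ ≤ C̃₁ + 1`. -/
theorem aux_estimate_first_half
    {m d : ℕ} {M : Type*} [MetricSpace M] [CompactSpace M] [Nonempty M]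
    [ChartedSpace (Euc m) M] [IsManifold (𝓡 m) (⊤ : ℕ∞) M]
    [MeasurableSpace M] [BorelSpace M]
    (f : M → M) (hf : IsC1HolderDiffeo (m := m) f)
    (μ : Measure M) [IsProbabilityMeasure μ] (herg : Ergodic f μ)
    (χ : ℝ) (hχ : IsChiHyperbolic (m := m) f μ χ)
    (A : M → GLd d) (α K : ℝ≥0) (hα : 0 < α)
    (hA : HolderWith K α fun w => (A w : Euc d →L[ℝ] Euc d))
    (hobs : PeriodicObstructionVanishes f A)
    (G : Set M) (hGcomp : IsCompact G) (hGbig : (9 / 10 : ℝ≥0∞) < μ G)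
    (x : M) (hxG : x ∈ G)
    (hdenseG : G ⊆ closure (fwdOrbit f x ∩ G))
    (hdenseSupp : measSupport μ ⊆ closure (fwdOrbit f x))
    (ε η C N : ℝ) (hε : 0 < ε) (hηε : ε < η) (hηχ : η < χ - ε)
    (hC : 0 < C) (hN : 1 ≤ N) (hεsmall : 10 * ε < (α : ℝ) * η)
    (hgrow : ∀ z ∈ G, ∀ n : ℕ,
      ‖cocycleCLM f A n z‖ ≤ N * Real.exp (ε * n) ∧
      ‖cocycleInv f A n z‖ ≤ N * Real.exp (ε * n))
    (L : ℝ) (hL : 0 < L) :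
    ∃ C1 : ℝ, 0 < C1 ∧
      ∀ h β : ℝ, 0 < h → h < 1 → 0 < β → ClosingProperty f G C η h β →
        ∀ (z p : M) (mm : ℕ),
          z ∈ fwdOrbit f x ∩ G → f^[2 * mm] z ∈ fwdOrbit f x ∩ G →
          dist z (f^[2 * mm] z) < β → f^[2 * mm] p = p →
          (∀ i : ℕ, i ≤ 2 * mm →
            dist (f^[i] z) (f^[i] p) ≤ h * C * Real.exp (-η * (min i (2 * mm - i) : ℕ))) →
          (∀ i : ℕ, i ≤ mm → ‖cocycleInv f A i p‖ ≤ L * Real.exp (2 * ε * i)) →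
          ‖cocycleInv f A mm p * cocycleCLM f A mm z - 1‖ ≤ C1 * h ^ (α : ℝ) ∧
          ‖cocycleInv f A mm p * cocycleCLM f A mm z‖ ≤ C1 + 1 := by
  set r : ℝ := Real.exp (3 * ε - (α : ℝ) * η) with hr_def
  have hr0 : 0 < r := Real.exp_pos _
  have hαpos : (0:ℝ) < (α : ℝ) := by exact_mod_cast hα
  have hr1 : r < 1 := by
    rw [hr_def, Real.exp_lt_one_iff]
    nlinarith
  have h1r : 0 < 1 - r := by linarith
  have hCα : (0:ℝ) < C ^ (α : ℝ) := Real.rpow_pos_of_pos hC _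
  have hK : (0:ℝ) ≤ (K : ℝ) := K.coe_nonneg
  set C0 : ℝ := L * Real.exp (2 * ε) * ((K : ℝ) + 1) * N * C ^ (α : ℝ) with hC0_def
  have hC0pos : 0 < C0 := by
    have hN0 : (0:ℝ) < N := by linarith
    have := Real.exp_pos (2 * ε)
    positivity
  refine ⟨C0 * (1 - r)⁻¹, by positivity, ?_⟩
  intro h β h0 h1 hβ _ z p mm hz hz2 hdist hper hclose hinvp
  have hhα : (0:ℝ) ≤ h ^ (α : ℝ) := Real.rpow_nonneg h0.le _
  -- bound each telescoping term
  have key : ∀ i ∈ Finset.range mm,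
      ‖cocycleInv f A (i+1) p * cocycleCLM f A (i+1) z -
        cocycleInv f A i p * cocycleCLM f A i z‖ ≤ C0 * h ^ (α : ℝ) * r ^ i := by
    intro i hi
    rw [Finset.mem_range] at hi
    rw [cocycle_step_eq]
    have hX : ‖cocycleInv f A (i+1) p‖ ≤ L * Real.exp (2 * ε * ((i:ℝ)+1)) := by
      have := hinvp (i+1) (by omega)
      push_cast at this
      exact this
    have hZ : ‖cocycleCLM f A i z‖ ≤ N * Real.exp (ε * i) := (hgrow z hz.2 i).1
    have hdzp : dist (f^[i] z) (f^[i] p) ≤ h * C * Real.exp (-η * i) := by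
      have hmin : min i (2 * mm - i) = i := by omega
      have := hclose i (by omega)
      rwa [hmin] at this
    have hbase : (0:ℝ) ≤ h * C * Real.exp (-η * i) := by positivity
    have hY : ‖(A (f^[i] z) : Euc d →L[ℝ] Euc d) - (A (f^[i] p) : Euc d →L[ℝ] Euc d)‖
        ≤ ((K : ℝ) + 1) * (h * C * Real.exp (-η * i)) ^ (α : ℝ) := by
      rw [← dist_eq_norm]
      refine (hA.dist_le (f^[i] z) (f^[i] p)).trans ?_
      have h2 : dist (f^[i] z) (f^[i] p) ^ (α : ℝ)
          ≤ (h * C * Real.exp (-η * i)) ^ (α : ℝ) :=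
        Real.rpow_le_rpow dist_nonneg hdzp hαpos.le
      have h3 : (0:ℝ) ≤ dist (f^[i] z) (f^[i] p) ^ (α : ℝ) :=
        Real.rpow_nonneg dist_nonneg _
      nlinarith [Real.rpow_nonneg hbase (α : ℝ)]
    have hXnn : (0:ℝ) ≤ L * Real.exp (2 * ε * ((i:ℝ)+1)) :=
      mul_nonneg hL.le (Real.exp_pos _).le
    have hYnn : (0:ℝ) ≤ ((K : ℝ) + 1) * (h * C * Real.exp (-η * i)) ^ (α : ℝ) :=
      mul_nonneg (by linarith) (Real.rpow_nonneg hbase _)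
    have hnorm : ‖cocycleInv f A (i+1) p *
          ((A (f^[i] z) : Euc d →L[ℝ] Euc d) - (A (f^[i] p) : Euc d →L[ℝ] Euc d)) *
          cocycleCLM f A i z‖
        ≤ (L * Real.exp (2 * ε * ((i:ℝ)+1))) *
          (((K : ℝ) + 1) * (h * C * Real.exp (-η * i)) ^ (α : ℝ)) *
          (N * Real.exp (ε * i)) := by
      have t1 : ‖cocycleInv f A (i+1) p *
            ((A (f^[i] z) : Euc d →L[ℝ] Euc d) - (A (f^[i] p) : Euc d →L[ℝ] Euc d)) *
            cocycleCLM f A i z‖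
          ≤ ‖cocycleInv f A (i+1) p‖ *
            ‖(A (f^[i] z) : Euc d →L[ℝ] Euc d) - (A (f^[i] p) : Euc d →L[ℝ] Euc d)‖ *
            ‖cocycleCLM f A i z‖ :=
        (norm_mul_le _ _).trans
          (mul_le_mul_of_nonneg_right (norm_mul_le _ _) (norm_nonneg _))
      refine t1.trans ?_
      exact mul_le_mul (mul_le_mul hX hY (norm_nonneg _) hXnn) hZ (norm_nonneg _)
        (mul_nonneg hXnn hYnn)
    refine hnorm.trans (le_of_eq ?_)
    have e1 : (h * C * Real.exp (-η * i)) ^ (α : ℝ)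
        = h ^ (α : ℝ) * C ^ (α : ℝ) * Real.exp (-η * i * (α : ℝ)) := by
      rw [Real.mul_rpow (by positivity) (Real.exp_pos _).le,
        Real.mul_rpow h0.le hC.le, ← Real.exp_mul]
    have e2 : Real.exp (2 * ε * ((i:ℝ)+1)) * Real.exp (-η * i * (α : ℝ)) *
          Real.exp (ε * i) = Real.exp (2 * ε) * r ^ i := by
      rw [hr_def, ← Real.exp_nat_mul, ← Real.exp_add, ← Real.exp_add, ← Real.exp_add]
      congr 1
      ring
    calc (L * Real.exp (2 * ε * ((i:ℝ)+1))) *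
          (((K : ℝ) + 1) * (h * C * Real.exp (-η * i)) ^ (α : ℝ)) *
          (N * Real.exp (ε * i))
        = (L * ((K : ℝ) + 1) * N * C ^ (α : ℝ) * h ^ (α : ℝ)) *
          (Real.exp (2 * ε * ((i:ℝ)+1)) * Real.exp (-η * i * (α : ℝ)) *
            Real.exp (ε * i)) := by rw [e1]; ring
      _ = C0 * h ^ (α : ℝ) * r ^ i := by rw [e2, hC0_def]; ring
  -- telescoping
  have tel : cocycleInv f A mm p * cocycleCLM f A mm z - 1
      = ∑ i ∈ Finset.range mm,
          (cocycleInv f A (i+1) p * cocycleCLM f A (i+1) z -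
            cocycleInv f A i p * cocycleCLM f A i z) := by
    rw [Finset.sum_range_sub
      (fun i => cocycleInv f A i p * cocycleCLM f A i z)]
    have : cocycleInv f A 0 p * cocycleCLM f A 0 z = 1 := by
      simp [cocycleInv, cocycleCLM, cocycle]
    rw [this]
  have hgeom : ∑ i ∈ Finset.range mm, r ^ i ≤ (1 - r)⁻¹ := by
    have hs : Summable fun i : ℕ => r ^ i := summable_geometric_of_lt_one hr0.le hr1
    have := Summable.sum_le_tsum (Finset.range mm)
      (fun i _ => pow_nonneg hr0.le i) hs
    rwa [tsum_geometric_of_lt_one hr0.le hr1] at this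
  have first : ‖cocycleInv f A mm p * cocycleCLM f A mm z - 1‖
      ≤ C0 * (1 - r)⁻¹ * h ^ (α : ℝ) := by
    rw [tel]
    calc ‖∑ i ∈ Finset.range mm,
            (cocycleInv f A (i+1) p * cocycleCLM f A (i+1) z -
              cocycleInv f A i p * cocycleCLM f A i z)‖
        ≤ ∑ i ∈ Finset.range mm,
            ‖cocycleInv f A (i+1) p * cocycleCLM f A (i+1) z -
              cocycleInv f A i p * cocycleCLM f A i z‖ := norm_sum_le _ _
      _ ≤ ∑ i ∈ Finset.range mm, C0 * h ^ (α : ℝ) * r ^ i :=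
          Finset.sum_le_sum key
      _ = C0 * h ^ (α : ℝ) * ∑ i ∈ Finset.range mm, r ^ i := by
          rw [← Finset.mul_sum]
      _ ≤ C0 * h ^ (α : ℝ) * (1 - r)⁻¹ :=
          mul_le_mul_of_nonneg_left hgeom (by positivity)
      _ = C0 * (1 - r)⁻¹ * h ^ (α : ℝ) := by ring
  refine ⟨first, ?_⟩
  have hnorm1 : ‖(1 : Euc d →L[ℝ] Euc d)‖ ≤ 1 := by
    rw [ContinuousLinearMap.one_def]
    exact ContinuousLinearMap.norm_id_le
  have htri : ‖cocycleInv f A mm p * cocycleCLM f A mm z‖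
      ≤ ‖cocycleInv f A mm p * cocycleCLM f A mm z - 1‖ + 1 := by
    have := norm_add_le (cocycleInv f A mm p * cocycleCLM f A mm z - 1)
      (1 : Euc d →L[ℝ] Euc d)
    rw [sub_add_cancel] at this
    linarith
  have hh1 : h ^ (α : ℝ) ≤ 1 := Real.rpow_le_one h0.le h1.le hαpos.le
  have : C0 * (1 - r)⁻¹ * h ^ (α : ℝ) ≤ C0 * (1 - r)⁻¹ * 1 :=
    mul_le_mul_of_nonneg_left hh1 (by positivity)
  linarith
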